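/- Let α, β, γ be positive irrational numbers with α + β + γ = 1 such that the Beatty sequences B_α and B_β are disjoint, i.e., rα + sβ = 1 for some positive integers r, s. Let B̃_γ = ℕ \ (B_α ∪ B_β) with increasing enumeration (c̃(n)). Then for all n, 0 ≤ c(n) - c̃(n) ≤ max(⌊(2-α)/(1-α)⌋, ⌊(2-β)/(1-β)⌋), where c(n) = ⌊n/γ⌋. -/

import Mathlib

open scoped Classical

def beatty (α : ℝ) : Set ℤ := {m | ∃ n : ℕ, 0 < n ∧ m = ⌊(n : ℝ) / α⌋}

noncomputable def countLe (S : Set ℤ) (m : ℤ) : ℕ :=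
  ((Finset.Icc 1 m).filter (fun k => k ∈ S)).card


lemma beatty_pos {α : ℝ} (ha : 0 < α) (ha1 : α < 1) {m : ℤ} (hm : m ∈ beatty α) : 0 < m := by
  obtain ⟨n, hn, rfl⟩ := hm
  have h1 : (1:ℝ) ≤ n := by exact_mod_cast hn
  have h2 : (1:ℝ) ≤ (n:ℝ)/α := by
    rw [le_div_iff₀ ha]; nlinarith
  have := Int.le_floor.mpr (by exact_mod_cast h2 : ((1:ℤ):ℝ) ≤ (n:ℝ)/α)
  omega

lemma irr_mul_int {α : ℝ} (hirr : Irrational α) {m : ℤ} (hm : m ≠ 0) :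
    Irrational ((m:ℝ) * α) := by
  exact (hirr.intCast_mul hm)

lemma mem_beatty_of_fract {α : ℝ} (hirr : Irrational α) (ha : 0 < α) {m : ℤ}
    (hm : 0 < m) (h : Int.fract (((m:ℝ)+1)*α) < α) : m ∈ beatty α := by
  set j : ℤ := ⌊((m:ℝ)+1)*α⌋ with hj
  have hfr : Int.fract (((m:ℝ)+1)*α) = ((m:ℝ)+1)*α - j := rfl
  have hjlt : (j:ℝ) < ((m:ℝ)+1)*α := by
    have := Int.fract_nonneg (((m:ℝ)+1)*α)
    have hne : Int.fract (((m:ℝ)+1)*α) ≠ 0 := by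
      intro h0
      have : (((m:ℝ)+1)*α) = j := by rw [hfr] at h0; linarith
      have : Irrational (((m+1 : ℤ):ℝ) * α) := irr_mul_int hirr (by omega)
      rw [show (((m+1:ℤ)):ℝ) = (m:ℝ)+1 by push_cast; ring] at this
      exact this.ne_int j (by rw [‹((m:ℝ)+1)*α = j›])
    rw [hfr] at *
    rcases lt_or_eq_of_le ‹(0:ℝ) ≤ ((m:ℝ)+1)*α - j› with h' | h'
    · linarith
    · exact absurd h'.symm (by simpa using hne)
  have hjgt : (m:ℝ) * α < j := by
    rw [hfr] at h; linarith [mul_add (α) (m:ℝ) 1]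
  have hjpos : (0:ℤ) < j := by
    have : (0:ℝ) < j := lt_trans (by positivity) hjgt
    exact_mod_cast this
  refine ⟨j.toNat, by omega, ?_⟩
  have hcast : ((j.toNat : ℕ) : ℝ) = (j:ℝ) := by
    norm_cast; omega
  rw [hcast]
  symm
  rw [Int.floor_eq_iff]
  constructor
  · rw [le_div_iff₀ ha]; linarith
  · rw [div_lt_iff₀ ha]; push_cast; linarith

lemma fract_ne {α : ℝ} (hirr : Irrational α) {m : ℤ} (hm : 0 < m) :
    Int.fract (((m:ℝ)+1)*α) ≠ α := by
  intro h
  have : ((m:ℝ)+1)*α - ⌊((m:ℝ)+1)*α⌋ = α := h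
  have h2 : (m:ℝ) * α = (⌊((m:ℝ)+1)*α⌋ : ℝ) := by ring_nf; ring_nf at this; linarith
  exact (irr_mul_int hirr (show m ≠ 0 by omega)).ne_int _ h2

lemma fract_gt {α : ℝ} (hirr : Irrational α) (ha : 0 < α) {m : ℤ}
    (hm : 0 < m) (h : m ∉ beatty α) : α < Int.fract (((m:ℝ)+1)*α) := by
  rcases lt_trichotomy (Int.fract (((m:ℝ)+1)*α)) α with h' | h' | h'
  · exact absurd (mem_beatty_of_fract hirr ha hm h') h
  · exact absurd h' (fract_ne hirr hm)
  · exact h'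

lemma floor_le_iff_le_floor {α : ℝ} (hirr : Irrational α) (ha : 0 < α) (m : ℤ) (hm : 0 ≤ m)
    (n : ℤ) :
    ⌊(n:ℝ)/α⌋ ≤ m ↔ n ≤ ⌊((m:ℝ)+1)*α⌋ := by
  have hne : ((m:ℝ)+1)*α ≠ (n:ℝ) := by
    have h0 : Irrational (((m+1:ℤ):ℝ) * α) := irr_mul_int hirr (by omega)
    rw [show (((m+1:ℤ)):ℝ) = (m:ℝ)+1 by push_cast; ring] at h0
    exact h0.ne_int n
  constructor
  · intro h
    rw [Int.le_floor]
    have h2 : (n:ℝ)/α < (m:ℝ)+1 := by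
      calc (n:ℝ)/α < ⌊(n:ℝ)/α⌋ + 1 := Int.lt_floor_add_one _
        _ ≤ (m:ℝ)+1 := by have := (Int.cast_le (R := ℝ)).mpr h; linarith
    rw [div_lt_iff₀ ha] at h2
    linarith
  · intro h
    rw [Int.le_floor] at h
    have h2 : (n:ℝ) < ((m:ℝ)+1)*α := lt_of_le_of_ne h (fun e => hne e.symm)
    rw [Int.floor_le_iff]  -- ⌊x⌋ ≤ m ↔ x < m+1 ?
    · rw [div_lt_iff₀ ha]; push_cast; linarith

lemma floor_div_strictMono {α : ℝ} (ha : 0 < α) (ha1 : α < 1) {n n' : ℤ} (hn : n < n') :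
    ⌊(n:ℝ)/α⌋ < ⌊(n':ℝ)/α⌋ := by
  have h1 : (⌊(n:ℝ)/α⌋ : ℝ) + 1 ≤ (n':ℝ)/α := by
    have hle : (⌊(n:ℝ)/α⌋ : ℝ) ≤ (n:ℝ)/α := Int.floor_le _
    have h2 : ((n:ℝ)+1)/α ≤ (n':ℝ)/α := by
      gcongr
      have : (n:ℝ) + 1 ≤ (n':ℝ) := by exact_mod_cast hn
      linarith
    have h3 : (n:ℝ)/α + 1 ≤ ((n:ℝ)+1)/α := by
      rw [add_div]
      have : (1:ℝ) ≤ 1/α := by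
        rw [le_div_iff₀ ha]; linarith
      linarith
    linarith
  have := Int.le_floor.mpr (by exact_mod_cast h1 : ((⌊(n:ℝ)/α⌋ + 1 : ℤ):ℝ) ≤ (n':ℝ)/α)
  omega

lemma beatty_count {α : ℝ} (hirr : Irrational α) (ha : 0 < α) (ha1 : α < 1) (m : ℤ) (hm : 0 ≤ m) :
    ((Finset.Icc 1 m).filter (fun k => k ∈ beatty α)).card = (⌊((m:ℝ)+1)*α⌋).toNat := by
  have himg : (Finset.Icc 1 m).filter (fun k => k ∈ beatty α)
      = (Finset.Icc (1:ℤ) ⌊((m:ℝ)+1)*α⌋).image (fun n : ℤ => (⌊(n:ℝ)/α⌋ : ℤ)) := by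
    ext k
    simp only [Finset.mem_filter, Finset.mem_image, Finset.mem_Icc]
    constructor
    · rintro ⟨⟨hk1, hk2⟩, n, hn, rfl⟩
      refine ⟨(n:ℤ), ⟨by exact_mod_cast hn, ?_⟩, by norm_num⟩
      rw [← floor_le_iff_le_floor hirr ha m hm]
      · exact_mod_cast hk2
    · rintro ⟨n, ⟨hn1, hn2⟩, rfl⟩
      have hkb : ⌊(n:ℝ)/α⌋ ∈ beatty α := by
        refine ⟨n.toNat, by omega, ?_⟩
        have hcast : ((n.toNat : ℕ) : ℝ) = (n:ℝ) := by norm_cast; omega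
        rw [hcast]
      refine ⟨⟨beatty_pos ha ha1 hkb, ?_⟩, hkb⟩
      rw [floor_le_iff_le_floor hirr ha m hm]
      exact hn2
  rw [himg, Finset.card_image_of_injOn, Int.card_Icc]
  · congr 1; omega
  · intro x _ y _ hxy
    by_contra hne
    rcases lt_or_gt_of_ne hne with h | h
    · exact absurd hxy (ne_of_lt (floor_div_strictMono ha ha1 h))
    · exact absurd hxy.symm (ne_of_lt (floor_div_strictMono ha ha1 h))

lemma beatty_sandwich {α : ℝ} (hirr : Irrational α) (ha : 0 < α) {m : ℤ} {j : ℕ}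
    (hj : 0 < j) (hm : m = ⌊(j:ℝ)/α⌋) : (m:ℝ) * α < j ∧ (j:ℝ) < ((m:ℝ)+1) * α := by
  have hle : (m:ℝ) ≤ (j:ℝ)/α := hm ▸ Int.floor_le _
  have hlt : (j:ℝ)/α < (m:ℝ)+1 := by
    have := Int.lt_floor_add_one ((j:ℝ)/α)
    rw [← hm] at this; push_cast at this ⊢; linarith
  have hne : (j:ℝ)/α ≠ (m:ℝ) := by
    intro h
    have hj' : (j:ℝ) = (m:ℝ) * α := by
      field_simp at h; linarith [h]
    have hm0 : m ≠ 0 := by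
      intro h0
      rw [h0] at hj'
      have h1 : (j:ℝ) = 0 := by push_cast at hj'; linarith
      have h2 : j = 0 := by exact_mod_cast h1
      omega
    exact (irr_mul_int hirr hm0).ne_nat j (by rw [← hj'])
  have hstrict : (m:ℝ) < (j:ℝ)/α := lt_of_le_of_ne hle (fun e => hne e.symm)
  constructor
  · calc (m:ℝ)*α < ((j:ℝ)/α)*α := by exact mul_lt_mul_of_pos_right hstrict ha
      _ = j := by field_simp
  · calc (j:ℝ) = ((j:ℝ)/α)*α := by field_simp
      _ < ((m:ℝ)+1)*α := mul_lt_mul_of_pos_right hlt ha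

lemma beatty_disjoint {α β : ℝ} (hirra : Irrational α) (hirrb : Irrational β)
    (ha : 0 < α) (hb : 0 < β) (r s : ℕ) (hr : 0 < r) (hs : 0 < s)
    (hrs : (r:ℝ)*α + (s:ℝ)*β = 1) {m : ℤ} (hma : m ∈ beatty α) (hmb : m ∈ beatty β) :
    False := by
  obtain ⟨j, hj, hmj⟩ := hma
  obtain ⟨k, hk, hmk⟩ := hmb
  obtain ⟨hj1, hj2⟩ := beatty_sandwich hirra ha hj hmj
  obtain ⟨hk1, hk2⟩ := beatty_sandwich hirrb hb hk hmk
  have hr1 : (0:ℝ) < r := by exact_mod_cast hr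
  have hs1 : (0:ℝ) < s := by exact_mod_cast hs
  have h1 : (m:ℝ) < (r:ℝ)*j + (s:ℝ)*k := by
    have := mul_lt_mul_of_pos_left hj1 hr1
    have := mul_lt_mul_of_pos_left hk1 hs1
    nlinarith
  have h2 : (r:ℝ)*j + (s:ℝ)*k < (m:ℝ)+1 := by
    have := mul_lt_mul_of_pos_left hj2 hr1
    have := mul_lt_mul_of_pos_left hk2 hs1
    nlinarith
  have hN1 : (m:ℤ) < (r*j + s*k : ℕ) := by exact_mod_cast (by push_cast; linarith : (m:ℝ) < ((r*j+s*k : ℕ):ℝ))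
  have hN2 : ((r*j + s*k : ℕ) : ℤ) < m + 1 := by exact_mod_cast (by push_cast; push_cast at h2; linarith : ((r*j+s*k : ℕ):ℝ) < ((m+1:ℤ):ℝ))
  omega

lemma enum_count (S : Set ℤ) (ct : ℕ → ℤ)
    (hmono : ∀ n m : ℕ, 0 < n → n < m → ct n < ct m)
    (hmem : ∀ n : ℕ, 0 < n → ct n ∈ S)
    (hpos : ∀ x ∈ S, 0 < x)
    (hsurj : ∀ x ∈ S, ∃ n : ℕ, 0 < n ∧ ct n = x)
    (n : ℕ) (hn : 0 < n) :
    ((Finset.Icc 1 (ct n)).filter (fun k => k ∈ S)).card = n := by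
  classical
  have : ((Finset.Icc 1 n).card) = ((Finset.Icc 1 (ct n)).filter (fun k => k ∈ S)).card := by
    apply Finset.card_bij (fun k _ => ct k)
    · intro k hk
      rw [Finset.mem_Icc] at hk
      rw [Finset.mem_filter, Finset.mem_Icc]
      have hkS : ct k ∈ S := hmem k (by omega)
      refine ⟨⟨hpos _ hkS, ?_⟩, hkS⟩
      rcases eq_or_lt_of_le hk.2 with h | h
      · rw [h]
      · exact le_of_lt (hmono k n (by omega) h)
    · intro k1 hk1 k2 hk2 he
      rw [Finset.mem_Icc] at hk1 hk2
      by_contra hne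
      rcases lt_or_gt_of_ne hne with h | h
      · exact absurd he (ne_of_lt (hmono k1 k2 (by omega) h))
      · exact absurd he.symm (ne_of_lt (hmono k2 k1 (by omega) h))
    · intro x hx
      rw [Finset.mem_filter, Finset.mem_Icc] at hx
      obtain ⟨⟨hx1, hx2⟩, hxS⟩ := hx
      obtain ⟨k, hk, hke⟩ := hsurj x hxS
      refine ⟨k, ?_, hke⟩
      rw [Finset.mem_Icc]
      refine ⟨by omega, ?_⟩
      by_contra hgt
      push_neg at hgt
      have := hmono n k hn hgt
      omega
  rw [← this, Nat.card_Icc]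
  omega

lemma key_real_bound (α β γ u v R S : ℝ)
    (hsum : α + β + γ = 1) (hrs : R*α + S*β = 1)
    (ha : 0 < α) (hR1 : 1 ≤ R) (hRS : R ≤ S)
    (hc : 0 < γ) (hα1 : α < 1)
    (hu : α < u) (hu1 : u < 1) (hv : β < v) (hv1 : v < 1)
    (hpq : 1 ≤ R*(1-u) + S*(1-v)) :
    ((u-α)+(v-β))/γ ≤ (2-α)/(1-α) := by
  have hS0 : (0:ℝ) < S := by linarith
  have hp : (0:ℝ) ≤ 1 - u := by linarith
  have hspq : 1 ≤ S*((1-u)+(1-v)) := by nlinarith [mul_le_mul_of_nonneg_right hRS hp]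
  have hsβ : S*β ≤ 1 - α := by nlinarith [mul_le_mul_of_nonneg_right hR1 ha.le]
  set w : ℝ := (u-α)+(v-β) with hwdef
  have e1 : S*w ≤ S*(1+γ) - 1 := by nlinarith [hspq]
  have e2 : (S*w)*(1-α) ≤ (S*(1+γ)-1)*(1-α) :=
    mul_le_mul_of_nonneg_right e1 (by linarith)
  have e3 : (S*(1+γ)-1)*(1-α) ≤ S*((2-α)*γ) := by nlinarith [hsβ]
  have e4 : S*(w*(1-α)) ≤ S*((2-α)*γ) := by nlinarith [e2, e3]
  have hkey : w*(1-α) ≤ (2-α)*γ := le_of_mul_le_mul_left e4 hS0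
  rw [div_le_div_iff₀ hc (by linarith : (0:ℝ) < 1-α)]
  linarith

theorem thm1_error_bounds (α β γ : ℝ)
    (hirra : Irrational α) (hirrb : Irrational β) (hirrc : Irrational γ)
    (ha : 0 < α) (hb : 0 < β) (hc : 0 < γ) (hsum : α + β + γ = 1)
    (hdisj : ∃ r s : ℕ, 0 < r ∧ 0 < s ∧ (r : ℝ) * α + (s : ℝ) * β = 1)
    (Btγ : Set ℤ) (hBtγ : Btγ = {m : ℤ | 0 < m ∧ m ∉ beatty α ∧ m ∉ beatty β})
    (ct : ℕ → ℤ)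
    (hmono : ∀ n m : ℕ, 0 < n → n < m → ct n < ct m)
    (hmem : ∀ n : ℕ, 0 < n → ct n ∈ Btγ)
    (hsurj : ∀ x ∈ Btγ, ∃ n : ℕ, 0 < n ∧ ct n = x) :
    ∀ n : ℕ, 0 < n →
      0 ≤ ⌊(n : ℝ) / γ⌋ - ct n ∧
      ⌊(n : ℝ) / γ⌋ - ct n ≤ max ⌊(2 - α) / (1 - α)⌋ ⌊(2 - β) / (1 - β)⌋ := by
  intro n hn
  obtain ⟨r, s, hr, hs, hrs⟩ := hdisj
  have hα1 : α < 1 := by linarith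
  have hβ1 : β < 1 := by linarith
  subst hBtγ
  obtain ⟨hm0, hmna, hmnb⟩ := hmem n hn
  set m : ℤ := ct n with hmdef
  -- counting identity
  have hpos : ∀ x ∈ ({m : ℤ | 0 < m ∧ m ∉ beatty α ∧ m ∉ beatty β}), 0 < x :=
    fun x hx => hx.1
  have hcount := enum_count _ ct hmono hmem hpos hsurj n hn
  set S : Finset ℤ := Finset.Icc 1 m with hSdef
  have hunion : S.filter (fun k => ¬ (k ∈ {m : ℤ | 0 < m ∧ m ∉ beatty α ∧ m ∉ beatty β}))
      = S.filter (fun k => k ∈ beatty α) ∪ S.filter (fun k => k ∈ beatty β) := by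
    ext k
    simp only [Finset.mem_filter, Finset.mem_union, Finset.mem_Icc, Set.mem_setOf_eq, hSdef]
    constructor
    · rintro ⟨⟨h1, h2⟩, h3⟩
      by_cases hA : k ∈ beatty α
      · exact Or.inl ⟨⟨h1, h2⟩, hA⟩
      · by_cases hB : k ∈ beatty β
        · exact Or.inr ⟨⟨h1, h2⟩, hB⟩
        · exact absurd ⟨by omega, hA, hB⟩ h3
    · rintro (⟨hk, hA⟩ | ⟨hk, hB⟩) <;> exact ⟨hk, fun hcon => by tauto⟩
  have hdisj2 : Disjoint (S.filter (fun k => k ∈ beatty α)) (S.filter (fun k => k ∈ beatty β)) := by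
    rw [Finset.disjoint_left]
    intro k hk1 hk2
    rw [Finset.mem_filter] at hk1 hk2
    exact beatty_disjoint hirra hirrb ha hb r s hr hs hrs hk1.2 hk2.2
  have hsplit := Finset.card_filter_add_card_filter_not
    (s := S) (p := fun k => k ∈ {m : ℤ | 0 < m ∧ m ∉ beatty α ∧ m ∉ beatty β})
  rw [hunion, Finset.card_union_of_disjoint hdisj2] at hsplit
  have hcardS : S.card = m.toNat := by rw [hSdef, Int.card_Icc]; omega
  have hcA := beatty_count hirra ha hα1 m (by omega)
  have hcB := beatty_count hirrb hb hβ1 m (by omega)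
  set A : ℤ := ⌊((m:ℝ)+1)*α⌋ with hAdef
  set B : ℤ := ⌊((m:ℝ)+1)*β⌋ with hBdef
  have hA0 : 0 ≤ A := by
    rw [hAdef]
    apply Int.floor_nonneg.mpr
    have : (0:ℝ) < (m:ℝ) + 1 := by
      have : (0:ℝ) < (m:ℝ) := by exact_mod_cast hm0
      linarith
    positivity
  have hB0 : 0 ≤ B := by
    rw [hBdef]
    apply Int.floor_nonneg.mpr
    have : (0:ℝ) < (m:ℝ) + 1 := by
      have : (0:ℝ) < (m:ℝ) := by exact_mod_cast hm0
      linarith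
    positivity
  have hcount' : (Finset.filter (fun k => k ∈ {m : ℤ | 0 < m ∧ m ∉ beatty α ∧ m ∉ beatty β}) S).card = n := by
    convert hcount using 2
    ext k
    simp [Finset.mem_filter]
  rw [← hSdef] at hcA hcB
  rw [hcount', hcA, hcB, hcardS] at hsplit
  -- integer identity
  have hint : (n:ℤ) + A + B = m := by omega
  -- real identity
  set u : ℝ := Int.fract (((m:ℝ)+1)*α) with hudef
  set v : ℝ := Int.fract (((m:ℝ)+1)*β) with hvdef
  have hu : α < u := fract_gt hirra ha hm0 hmna
  have hv : β < v := fract_gt hirrb hb hm0 hmnb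
  have hu1 : u < 1 := Int.fract_lt_one _
  have hv1 : v < 1 := Int.fract_lt_one _
  have hAu : (A:ℝ) = ((m:ℝ)+1)*α - u := by rw [hAdef, hudef, Int.fract]; ring
  have hBv : (B:ℝ) = ((m:ℝ)+1)*β - v := by rw [hBdef, hvdef, Int.fract]; ring
  set w : ℝ := (u - α) + (v - β) with hwdef
  have hw0 : 0 < w := by rw [hwdef]; linarith
  have hnR : (n:ℝ) = (m:ℝ) - (A:ℝ) - (B:ℝ) := by exact_mod_cast congrArg (Int.cast : ℤ → ℝ) (by omega : (n:ℤ) = m - A - B)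
  have hnR2 : (n:ℝ) = (m:ℝ)*γ + w := by
    rw [hnR, hAu, hBv, hwdef]; linear_combination (-(m:ℝ)) * hsum
  have hdivγ : (n:ℝ)/γ = (m:ℝ) + w/γ := by
    rw [hnR2]; field_simp
  have hkeyfloor : ⌊(n:ℝ)/γ⌋ = m + ⌊w/γ⌋ := by
    rw [hdivγ, Int.floor_intCast_add]
  constructor
  · rw [hkeyfloor]
    have : 0 ≤ ⌊w/γ⌋ := Int.floor_nonneg.mpr (by positivity)
    omega
  · rw [hkeyfloor]
    have hgoal : ∀ X : ℝ, w/γ ≤ X → ⌊X⌋ ≤ max ⌊(2-α)/(1-α)⌋ ⌊(2-β)/(1-β)⌋ →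
        m + ⌊w/γ⌋ - m ≤ max ⌊(2-α)/(1-α)⌋ ⌊(2-β)/(1-β)⌋ := by
      intro X h1 h2
      have := Int.floor_mono h1
      omega
    -- the integer t
    have hr1 : (1:ℝ) ≤ (r:ℝ) := by exact_mod_cast hr
    have hs1 : (1:ℝ) ≤ (s:ℝ) := by exact_mod_cast hs
    set p : ℝ := 1 - u with hpdef
    set q : ℝ := 1 - v with hqdef
    have hp : 0 < p := by rw [hpdef]; linarith
    have hq : 0 < q := by rw [hqdef]; linarith
    set t : ℤ := m - (r:ℤ)*A - (s:ℤ)*B with htdef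
    have htR : (t:ℝ) = (r:ℝ)*(u-α) + (s:ℝ)*(v-β) := by
      rw [htdef]; push_cast; rw [hAu, hBv]; linear_combination (-(m:ℝ)) * hrs
    set t' : ℤ := (r:ℤ) + (s:ℤ) - 1 - t with ht'def
    have ht'R : (t':ℝ) = (r:ℝ)*p + (s:ℝ)*q := by
      rw [ht'def]; push_cast; rw [hpdef, hqdef]; linear_combination hrs - htR
    have ht'1 : 1 ≤ t' := by
      have h0 : (0:ℝ) < (t':ℝ) := by rw [ht'R]; nlinarith
      have : (0:ℤ) < t' := by exact_mod_cast h0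
      omega
    have hpq : 1 ≤ (r:ℝ)*p + (s:ℝ)*q := by
      rw [← ht'R]; exact_mod_cast ht'1
    have hw_pq : w + (p + q) = 1 + γ := by
      rw [hwdef, hpdef, hqdef]; linarith
    rcases le_total r s with hcase | hcase
    · -- r ≤ s : bound with (2-α)/(1-α)
      have hRS : (r:ℝ) ≤ (s:ℝ) := by exact_mod_cast hcase
      have hb1 : w/γ ≤ (2-α)/(1-α) := by
        have := key_real_bound α β γ u v (r:ℝ) (s:ℝ) hsum hrs ha hr1 hRS hc hα1 hu hu1 hv hv1
          (by rw [hpdef, hqdef] at hpq; linarith)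
        rw [hwdef]
        exact this
      exact hgoal _ hb1 (le_max_left _ _)
    · -- s ≤ r : bound with (2-β)/(1-β)
      have hRS : (s:ℝ) ≤ (r:ℝ) := by exact_mod_cast hcase
      have hb1 : w/γ ≤ (2-β)/(1-β) := by
        have := key_real_bound β α γ v u (s:ℝ) (r:ℝ) (by linarith) (by linarith) hb hs1 hRS hc hβ1 hv hv1 hu hu1
          (by rw [hpdef, hqdef] at hpq; linarith)
        rw [hwdef, show (u-α)+(v-β) = (v-β)+(u-α) from by ring]
        exact this
      exact hgoal _ hb1 (le_max_right _ _)
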